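/- Let C̄ be an r×r integer matrix, t : Fin r → ℤ with t_a C̄_{ab} = t_b C̄_{ba}, δ = det C̄, T = diag(t), and Λ = δ T C̄⁻¹ (a symmetric matrix). Given k ≥ 1, nonnegative integer arrays m = (m_{a,i}) and n = (n_{a,i}) for a ∈ Fin r, i ∈ {1,…,k}, and integers ℓ_a, define q_{a,i} = ℓ_a + ∑_{j=i+1}^k ∑_b (j-i)(C̄_{ab} m_{b,j} − δ_{ab} n_{b,j}) for 0 ≤ i ≤ k, and Q(m,n) = (1/2) ∑_{i,j=1}^k ∑_{a,b} t_a min(i,j) m_{a,i}(C̄_{ab} m_{b,j} − 2 δ_{ab} n_{b,j}). Then, writing q_j = (q_{a,j})_a and n_i = (n_{a,i})_a, one has Q(m,n) = (1/(2δ)) [ ∑_{j=1}^k (q_{j-1}−q_j)·Λ(q_{j-1}−q_j) − ∑_{j=1}^k (∑_{i=j}^k n_i)·Λ(∑_{i=j}^k n_i) ]. -/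

import Mathlib

open scoped Matrix

lemma rot3 {α β γ M : Type*} [AddCommMonoid M] (A : Finset α) (B : Finset β) (C : Finset γ)
    (f : α → β → γ → M) :
    ∑ a ∈ A, ∑ b ∈ B, ∑ c ∈ C, f a b c = ∑ b ∈ B, ∑ c ∈ C, ∑ a ∈ A, f a b c :=
  Finset.sum_comm.trans (Finset.sum_congr rfl fun _ _ => Finset.sum_comm)

lemma Bsum {r : ℕ} (Λ : Matrix (Fin r) (Fin r) ℚ) (s : Finset ℕ) (x y : ℕ → Fin r → ℚ) :
    dotProduct (fun a => ∑ i ∈ s, x i a) (Λ.mulVec (fun a => ∑ i ∈ s, y i a))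
      = ∑ i ∈ s, ∑ i' ∈ s, dotProduct (x i) (Λ.mulVec (y i')) := by
  have hy : (fun a => ∑ i ∈ s, y i a) = ∑ i ∈ s, y i := by
    funext a; rw [Finset.sum_apply]
  have hx : (fun a => ∑ i ∈ s, x i a) = ∑ i ∈ s, x i := by
    funext a; rw [Finset.sum_apply]
  have hmv : Λ.mulVec (∑ i ∈ s, y i) = ∑ i ∈ s, Λ.mulVec (y i) := by
    rw [← Matrix.mulVecLin_apply, map_sum]
    simp [Matrix.mulVecLin_apply]
  rw [hy, hx, hmv]
  simp only [dotProduct, Finset.sum_apply, Finset.sum_mul, Finset.mul_sum]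
  rw [rot3]
  exact Finset.sum_comm

lemma sum_Icc_min (k : ℕ) (f : ℕ → ℕ → ℚ) :
    ∑ j ∈ Finset.Icc 1 k, ∑ i ∈ Finset.Icc j k, ∑ i' ∈ Finset.Icc j k, f i i'
      = ∑ i ∈ Finset.Icc 1 k, ∑ i' ∈ Finset.Icc 1 k, ((min i i' : ℕ) : ℚ) * f i i' := by
  have hfil : ∀ j ∈ Finset.Icc 1 k, Finset.Icc j k = (Finset.Icc 1 k).filter (fun i => j ≤ i) := by
    intro j hj
    simp only [Finset.mem_Icc] at hj
    ext x; simp only [Finset.mem_Icc, Finset.mem_filter]; omega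
  calc ∑ j ∈ Finset.Icc 1 k, ∑ i ∈ Finset.Icc j k, ∑ i' ∈ Finset.Icc j k, f i i'
      = ∑ j ∈ Finset.Icc 1 k, ∑ i ∈ Finset.Icc 1 k, ∑ i' ∈ Finset.Icc 1 k,
          (if j ≤ i ∧ j ≤ i' then (1:ℚ) else 0) * f i i' := by
        refine Finset.sum_congr rfl fun j hj => ?_
        rw [hfil j hj, Finset.sum_filter]
        refine Finset.sum_congr rfl fun i _ => ?_
        by_cases h : j ≤ i
        · simp only [h, if_true, true_and, Finset.sum_filter]
          refine Finset.sum_congr rfl fun i' _ => ?_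
          by_cases h' : j ≤ i' <;> simp [h']
        · simp [h]
    _ = ∑ i ∈ Finset.Icc 1 k, ∑ i' ∈ Finset.Icc 1 k,
          (∑ j ∈ Finset.Icc 1 k, if j ≤ i ∧ j ≤ i' then (1:ℚ) else 0) * f i i' := by
        rw [rot3]
        exact Finset.sum_congr rfl fun i _ => Finset.sum_congr rfl fun i' _ =>
          (Finset.sum_mul _ _ _).symm
    _ = ∑ i ∈ Finset.Icc 1 k, ∑ i' ∈ Finset.Icc 1 k, ((min i i' : ℕ) : ℚ) * f i i' := by
        refine Finset.sum_congr rfl fun i hi => Finset.sum_congr rfl fun i' hi' => ?_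
        simp only [Finset.mem_Icc] at hi hi'
        congr 1
        have h1 : ∀ j, (j ≤ i ∧ j ≤ i') ↔ j ≤ min i i' := fun j => by omega
        simp only [h1]
        rw [Finset.sum_ite, Finset.sum_const_zero, add_zero, Finset.sum_const]
        have h2 : (Finset.Icc 1 k).filter (fun j => j ≤ min i i') = Finset.Icc 1 (min i i') := by
          ext x; simp only [Finset.mem_Icc, Finset.mem_filter]; omega
        rw [h2]
        simp [Nat.card_Icc]

/-- Lemma 4.4 of the paper: with `Λ = δ • (T * C̄⁻¹)` symmetric,
the quadratic form `Q(m, n)` of the fermionic sum can be rewritten as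
`(1/(2δ)) [ ∑_{j=1}^k (q_{j-1} − q_j)·Λ(q_{j-1} − q_j)
            − ∑_{j=1}^k (∑_{i=j}^k n_i)·Λ(∑_{i=j}^k n_i) ]`,
where `q_{a,i} = ℓ_a + ∑_{j=i+1}^k ∑_b (j−i)(C̄_{ab} m_{b,j} − δ_{ab} n_{b,j})`. -/
theorem stmt2 (r k : ℕ) (hk : 1 ≤ k)
    (C : Matrix (Fin r) (Fin r) ℤ) (hC : C.det ≠ 0)
    (t : Fin r → ℤ) (ht : ∀ a, 0 < t a)
    (hsymm : ∀ a b, t a * C a b = t b * C b a)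
    (m n : Fin r → ℕ → ℕ) (ℓ : Fin r → ℤ)
    (Λ : Matrix (Fin r) (Fin r) ℚ)
    (hΛ : Λ = (C.det : ℚ) •
      (Matrix.diagonal (fun a => (t a : ℚ)) * (C.map (Int.cast : ℤ → ℚ))⁻¹))
    (q : Fin r → ℕ → ℚ)
    (hq : ∀ a i, q a i = (ℓ a : ℚ) +
      ∑ j ∈ Finset.Icc (i + 1) k, ∑ b : Fin r,
        ((j : ℚ) - (i : ℚ)) *
          ((C a b : ℚ) * (m b j : ℚ) - (if a = b then (n b j : ℚ) else 0)))
    (Q : ℚ)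
    (hQ : Q = (1 / 2) * ∑ i ∈ Finset.Icc 1 k, ∑ j ∈ Finset.Icc 1 k,
      ∑ a : Fin r, ∑ b : Fin r,
        (t a : ℚ) * (min i j : ℕ) * (m a i : ℚ) *
          ((C a b : ℚ) * (m b j : ℚ) - 2 * (if a = b then (n b j : ℚ) else 0))) :
    Q = (1 / (2 * (C.det : ℚ))) *
      ((∑ j ∈ Finset.Icc 1 k,
          dotProduct (fun a => q a (j - 1) - q a j)
            (Λ.mulVec (fun a => q a (j - 1) - q a j))) -
        ∑ j ∈ Finset.Icc 1 k,
          dotProduct (fun a => ∑ i ∈ Finset.Icc j k, (n a i : ℚ))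
            (Λ.mulVec (fun a => ∑ i ∈ Finset.Icc j k, (n a i : ℚ)))) := by
  have hδ : (C.det : ℚ) ≠ 0 := Int.cast_ne_zero.mpr hC
  have hdet : (C.map (Int.cast : ℤ → ℚ)).det = ((C.det : ℤ) : ℚ) := by
    have h := RingHom.map_det (Int.castRingHom ℚ) C
    simpa [RingHom.mapMatrix_apply] using h.symm
  have hunit : IsUnit (C.map (Int.cast : ℤ → ℚ)).det := by
    rw [hdet]; exact isUnit_iff_ne_zero.mpr hδ
  have hΛC : Λ * C.map (Int.cast : ℤ → ℚ)
      = (C.det : ℚ) • Matrix.diagonal (fun a => (t a : ℚ)) := by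
    rw [hΛ, Matrix.smul_mul, Matrix.mul_assoc, Matrix.nonsing_inv_mul _ hunit, Matrix.mul_one]
  -- key scalar identity
  have key : ∀ x y : Fin r → ℚ,
      dotProduct x (Λ.mulVec ((C.map (Int.cast : ℤ → ℚ)).mulVec y))
        = (C.det : ℚ) * ∑ a, (t a : ℚ) * x a * y a := by
    intro x y
    rw [Matrix.mulVec_mulVec, hΛC]
    simp only [Matrix.smul_mulVec, dotProduct, Pi.smul_apply,
      Matrix.mulVec_diagonal, smul_eq_mul, Finset.mul_sum]
    exact Finset.sum_congr rfl fun a _ => by ring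
  -- symmetry of Λ
  have hTC : Matrix.diagonal (fun a => (t a : ℚ)) * C.map (Int.cast : ℤ → ℚ)
      = (C.map (Int.cast : ℤ → ℚ))ᵀ * Matrix.diagonal (fun a => (t a : ℚ)) := by
    ext a b
    simp only [Matrix.diagonal_mul, Matrix.mul_diagonal, Matrix.transpose_apply,
      Matrix.map_apply]
    rw [mul_comm ((C b a : ℚ))]
    exact_mod_cast hsymm a b
  have hΛT : Λᵀ = Λ := by
    have hunitT : IsUnit ((C.map (Int.cast : ℤ → ℚ))ᵀ).det := by
      rw [Matrix.det_transpose]; exact hunit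
    rw [hΛ, Matrix.transpose_smul, Matrix.transpose_mul, Matrix.transpose_nonsing_inv,
      Matrix.diagonal_transpose]
    congr 1
    calc ((C.map (Int.cast : ℤ → ℚ))ᵀ)⁻¹ * Matrix.diagonal (fun a => (t a : ℚ))
        = ((C.map (Int.cast : ℤ → ℚ))ᵀ)⁻¹ *
            ((Matrix.diagonal (fun a => (t a : ℚ)) * C.map (Int.cast : ℤ → ℚ)) *
              (C.map (Int.cast : ℤ → ℚ))⁻¹) := by
          rw [Matrix.mul_assoc, Matrix.mul_nonsing_inv _ hunit, Matrix.mul_one]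
      _ = (((C.map (Int.cast : ℤ → ℚ))ᵀ)⁻¹ * (C.map (Int.cast : ℤ → ℚ))ᵀ) *
            (Matrix.diagonal (fun a => (t a : ℚ)) * (C.map (Int.cast : ℤ → ℚ))⁻¹) := by
          rw [hTC, Matrix.mul_assoc, Matrix.mul_assoc]
      _ = Matrix.diagonal (fun a => (t a : ℚ)) * (C.map (Int.cast : ℤ → ℚ))⁻¹ := by
          rw [Matrix.nonsing_inv_mul _ hunitT, Matrix.one_mul]
  have hBsym : ∀ x y : Fin r → ℚ,
      dotProduct x (Λ.mulVec y) = dotProduct y (Λ.mulVec x) := by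
    intro x y
    rw [Matrix.dotProduct_mulVec, ← Matrix.mulVec_transpose, hΛT, dotProduct_comm]
  -- difference of charges
  have hd : ∀ j ∈ Finset.Icc 1 k, ∀ a : Fin r,
      q a (j - 1) - q a j = ∑ i ∈ Finset.Icc j k,
        ((C.map (Int.cast : ℤ → ℚ)).mulVec (fun b => (m b i : ℚ)) a - (n a i : ℚ)) := by
    intro j hj a
    simp only [Finset.mem_Icc] at hj
    obtain ⟨hj1, hjk⟩ := hj
    have e1 : j - 1 + 1 = j := by omega
    have e2 : ((j - 1 : ℕ) : ℚ) = (j : ℚ) - 1 := by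
      rw [Nat.cast_sub hj1, Nat.cast_one]
    have hins : Finset.Icc j k = insert j (Finset.Icc (j + 1) k) := by
      rw [Finset.Icc_add_one_left_eq_Ioc, Finset.Ioc_insert_left hjk]
    have e3 : ∑ j' ∈ Finset.Icc (j + 1) k, ∑ b, ((j' : ℚ) - (j : ℚ)) *
          ((C a b : ℚ) * (m b j' : ℚ) - (if a = b then (n b j' : ℚ) else 0))
        = ∑ j' ∈ Finset.Icc j k, ∑ b, ((j' : ℚ) - (j : ℚ)) *
          ((C a b : ℚ) * (m b j' : ℚ) - (if a = b then (n b j' : ℚ) else 0)) := by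
      rw [hins, Finset.sum_insert (by simp [Finset.mem_Icc])]
      simp
    rw [hq a (j - 1), hq a j, e1, e2, e3, add_sub_add_left_eq_sub, ← Finset.sum_sub_distrib]
    refine Finset.sum_congr rfl fun j' _ => ?_
    rw [← Finset.sum_sub_distrib]
    have hb : ∀ b : Fin r,
        ((j' : ℚ) - ((j : ℚ) - 1)) *
            ((C a b : ℚ) * (m b j' : ℚ) - (if a = b then (n b j' : ℚ) else 0))
          - ((j' : ℚ) - (j : ℚ)) *
            ((C a b : ℚ) * (m b j' : ℚ) - (if a = b then (n b j' : ℚ) else 0))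
        = ((C a b : ℚ) * (m b j' : ℚ) - (if a = b then (n b j' : ℚ) else 0)) := fun b => by ring
    rw [Finset.sum_congr rfl fun b _ => hb b, Finset.sum_sub_distrib,
      Finset.sum_ite_eq Finset.univ a (fun b => (n b j' : ℚ)), if_pos (Finset.mem_univ a)]
    rfl
  -- per-j expansion into double sums
  have hmain : ∀ j ∈ Finset.Icc 1 k,
      dotProduct (fun a => q a (j - 1) - q a j)
          (Λ.mulVec (fun a => q a (j - 1) - q a j))
        - dotProduct (fun a => ∑ i ∈ Finset.Icc j k, (n a i : ℚ))
            (Λ.mulVec (fun a => ∑ i ∈ Finset.Icc j k, (n a i : ℚ)))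
      = ∑ i ∈ Finset.Icc j k, ∑ i' ∈ Finset.Icc j k,
          (dotProduct
              (fun a => (C.map (Int.cast : ℤ → ℚ)).mulVec (fun b => (m b i : ℚ)) a - (n a i : ℚ))
              (Λ.mulVec (fun a =>
                (C.map (Int.cast : ℤ → ℚ)).mulVec (fun b => (m b i' : ℚ)) a - (n a i' : ℚ)))
            - dotProduct (fun a => (n a i : ℚ)) (Λ.mulVec (fun a => (n a i' : ℚ)))) := by
    intro j hj
    have h1 : (fun a => q a (j - 1) - q a j)
        = (fun a => ∑ i ∈ Finset.Icc j k,
            ((C.map (Int.cast : ℤ → ℚ)).mulVec (fun b => (m b i : ℚ)) a - (n a i : ℚ))) :=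
      funext (hd j hj)
    rw [h1]
    rw [Bsum Λ (Finset.Icc j k)
      (fun i a => (C.map (Int.cast : ℤ → ℚ)).mulVec (fun b => (m b i : ℚ)) a - (n a i : ℚ))
      (fun i a => (C.map (Int.cast : ℤ → ℚ)).mulVec (fun b => (m b i : ℚ)) a - (n a i : ℚ))]
    rw [Bsum Λ (Finset.Icc j k) (fun i a => (n a i : ℚ)) (fun i a => (n a i : ℚ))]
    rw [← Finset.sum_sub_distrib]
    exact Finset.sum_congr rfl fun i _ => (Finset.sum_sub_distrib _ _).symm
  -- sum over j, introducing min
  have hsum2 : (∑ j ∈ Finset.Icc 1 k,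
        dotProduct (fun a => q a (j - 1) - q a j)
          (Λ.mulVec (fun a => q a (j - 1) - q a j)))
      - ∑ j ∈ Finset.Icc 1 k,
          dotProduct (fun a => ∑ i ∈ Finset.Icc j k, (n a i : ℚ))
            (Λ.mulVec (fun a => ∑ i ∈ Finset.Icc j k, (n a i : ℚ)))
      = ∑ i ∈ Finset.Icc 1 k, ∑ i' ∈ Finset.Icc 1 k, ((min i i' : ℕ) : ℚ) *
          (dotProduct
              (fun a => (C.map (Int.cast : ℤ → ℚ)).mulVec (fun b => (m b i : ℚ)) a - (n a i : ℚ))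
              (Λ.mulVec (fun a =>
                (C.map (Int.cast : ℤ → ℚ)).mulVec (fun b => (m b i' : ℚ)) a - (n a i' : ℚ)))
            - dotProduct (fun a => (n a i : ℚ)) (Λ.mulVec (fun a => (n a i' : ℚ)))) := by
    rw [← Finset.sum_sub_distrib, Finset.sum_congr rfl hmain,
      sum_Icc_min k (fun i i' =>
        (dotProduct
            (fun a => (C.map (Int.cast : ℤ → ℚ)).mulVec (fun b => (m b i : ℚ)) a - (n a i : ℚ))
            (Λ.mulVec (fun a =>
              (C.map (Int.cast : ℤ → ℚ)).mulVec (fun b => (m b i' : ℚ)) a - (n a i' : ℚ)))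
          - dotProduct (fun a => (n a i : ℚ)) (Λ.mulVec (fun a => (n a i' : ℚ)))))]
  -- pointwise quadratic identity
  have hF : ∀ i i' : ℕ,
      dotProduct
          (fun a => (C.map (Int.cast : ℤ → ℚ)).mulVec (fun b => (m b i : ℚ)) a - (n a i : ℚ))
          (Λ.mulVec (fun a =>
            (C.map (Int.cast : ℤ → ℚ)).mulVec (fun b => (m b i' : ℚ)) a - (n a i' : ℚ)))
        - dotProduct (fun a => (n a i : ℚ)) (Λ.mulVec (fun a => (n a i' : ℚ)))
      = (C.det : ℚ) *
          ((∑ a, (t a : ℚ) * ((C.map (Int.cast : ℤ → ℚ)).mulVec (fun b => (m b i : ℚ)) a)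
              * (m a i' : ℚ))
            - (∑ a, (t a : ℚ) * (n a i : ℚ) * (m a i' : ℚ))
            - (∑ a, (t a : ℚ) * (n a i' : ℚ) * (m a i : ℚ))) := by
    intro i i'
    have hw : ∀ i0 : ℕ,
        (fun a => (C.map (Int.cast : ℤ → ℚ)).mulVec (fun b => (m b i0 : ℚ)) a - (n a i0 : ℚ))
          = (C.map (Int.cast : ℤ → ℚ)).mulVec (fun b => (m b i0 : ℚ)) -
              (fun a => (n a i0 : ℚ)) := fun _ => rfl
    have k1 : dotProduct ((C.map (Int.cast : ℤ → ℚ)).mulVec (fun b => (m b i : ℚ)))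
          (Λ.mulVec ((C.map (Int.cast : ℤ → ℚ)).mulVec (fun b => (m b i' : ℚ))))
        = (C.det : ℚ) * ∑ a, (t a : ℚ)
            * ((C.map (Int.cast : ℤ → ℚ)).mulVec (fun b => (m b i : ℚ)) a) * (m a i' : ℚ) := by
      simpa using key ((C.map (Int.cast : ℤ → ℚ)).mulVec (fun b => (m b i : ℚ)))
        (fun b => (m b i' : ℚ))
    have k2 : dotProduct (fun a => (n a i : ℚ))
          (Λ.mulVec ((C.map (Int.cast : ℤ → ℚ)).mulVec (fun b => (m b i' : ℚ))))
        = (C.det : ℚ) * ∑ a, (t a : ℚ) * (n a i : ℚ) * (m a i' : ℚ) := by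
      simpa using key (fun a => (n a i : ℚ)) (fun b => (m b i' : ℚ))
    have k3 : dotProduct (fun a => (n a i' : ℚ))
          (Λ.mulVec ((C.map (Int.cast : ℤ → ℚ)).mulVec (fun b => (m b i : ℚ))))
        = (C.det : ℚ) * ∑ a, (t a : ℚ) * (n a i' : ℚ) * (m a i : ℚ) := by
      simpa using key (fun a => (n a i' : ℚ)) (fun b => (m b i : ℚ))
    have hb := hBsym ((C.map (Int.cast : ℤ → ℚ)).mulVec (fun b => (m b i : ℚ)))
      (fun a => (n a i' : ℚ))
    rw [hw i, hw i', Matrix.mulVec_sub, sub_dotProduct, dotProduct_sub,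
      dotProduct_sub]
    linear_combination k1 - k2 - k3 - hb
  -- rewriting the leading quadratic term using symmetrizability
  have hS1 : ∀ i i' : ℕ,
      ∑ a, (t a : ℚ) * ((C.map (Int.cast : ℤ → ℚ)).mulVec (fun b => (m b i : ℚ)) a) * (m a i' : ℚ)
        = ∑ a, ∑ b, (t a : ℚ) * (C a b : ℚ) * (m a i : ℚ) * (m b i' : ℚ) := by
    intro i i'
    simp only [Matrix.mulVec, dotProduct, Matrix.map_apply, Finset.sum_mul,
      Finset.mul_sum]
    rw [Finset.sum_comm]
    refine Finset.sum_congr rfl fun a _ => Finset.sum_congr rfl fun b _ => ?_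
    have h : (t b : ℚ) * (C b a : ℚ) = (t a : ℚ) * (C a b : ℚ) := by
      exact_mod_cast (hsymm a b).symm
    linear_combination ((m a i : ℚ) * (m b i' : ℚ)) * h
  -- rewrite Q with min pulled out
  have hQ2 : Q = (1 / 2) * ∑ i ∈ Finset.Icc 1 k, ∑ i' ∈ Finset.Icc 1 k,
      ((min i i' : ℕ) : ℚ) *
        ((∑ a, ∑ b, (t a : ℚ) * (C a b : ℚ) * (m a i : ℚ) * (m b i' : ℚ))
          - 2 * ∑ a, (t a : ℚ) * (n a i' : ℚ) * (m a i : ℚ)) := by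
    rw [hQ]
    refine congrArg _ (Finset.sum_congr rfl fun i _ => Finset.sum_congr rfl fun i' _ => ?_)
    have l1 : ∀ a : Fin r, ∑ b, (t a : ℚ) * (min i i' : ℕ) * (m a i : ℚ) *
          ((C a b : ℚ) * (m b i' : ℚ) - 2 * (if a = b then (n b i' : ℚ) else 0))
        = ((min i i' : ℕ) : ℚ) * ((∑ b, (t a : ℚ) * (C a b : ℚ) * (m a i : ℚ) * (m b i' : ℚ))
            - 2 * ((t a : ℚ) * (n a i' : ℚ) * (m a i : ℚ))) := by
      intro a
      have e1 : ∀ b : Fin r, (t a : ℚ) * (min i i' : ℕ) * (m a i : ℚ) *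
            ((C a b : ℚ) * (m b i' : ℚ) - 2 * (if a = b then (n b i' : ℚ) else 0))
          = ((min i i' : ℕ) : ℚ) * ((t a : ℚ) * (C a b : ℚ) * (m a i : ℚ) * (m b i' : ℚ))
            - ((min i i' : ℕ) : ℚ) * 2 *
              (if a = b then (t a : ℚ) * (n b i' : ℚ) * (m a i : ℚ) else 0) := by
        intro b; split <;> ring
      rw [Finset.sum_congr rfl fun b _ => e1 b, Finset.sum_sub_distrib, ← Finset.mul_sum,
        ← Finset.mul_sum, Finset.sum_ite_eq Finset.univ a
          (fun b => (t a : ℚ) * (n b i' : ℚ) * (m a i : ℚ)), if_pos (Finset.mem_univ a)]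
      ring
    rw [Finset.sum_congr rfl fun a _ => l1 a, ← Finset.mul_sum, Finset.sum_sub_distrib,
      ← Finset.mul_sum]
  -- antisymmetric part cancels
  have hswap : ∑ i ∈ Finset.Icc 1 k, ∑ i' ∈ Finset.Icc 1 k, ((min i i' : ℕ) : ℚ) *
        ((C.det : ℚ) * ∑ a, (t a : ℚ) * (n a i : ℚ) * (m a i' : ℚ))
      = ∑ i ∈ Finset.Icc 1 k, ∑ i' ∈ Finset.Icc 1 k, ((min i i' : ℕ) : ℚ) *
        ((C.det : ℚ) * ∑ a, (t a : ℚ) * (n a i' : ℚ) * (m a i : ℚ)) := by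
    rw [Finset.sum_comm]
    refine Finset.sum_congr rfl fun i _ => Finset.sum_congr rfl fun i' _ => ?_
    rw [min_comm]
  -- big rewrite of the min-weighted sum
  have hbig : ∑ i ∈ Finset.Icc 1 k, ∑ i' ∈ Finset.Icc 1 k, ((min i i' : ℕ) : ℚ) *
        (dotProduct
            (fun a => (C.map (Int.cast : ℤ → ℚ)).mulVec (fun b => (m b i : ℚ)) a - (n a i : ℚ))
            (Λ.mulVec (fun a =>
              (C.map (Int.cast : ℤ → ℚ)).mulVec (fun b => (m b i' : ℚ)) a - (n a i' : ℚ)))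
          - dotProduct (fun a => (n a i : ℚ)) (Λ.mulVec (fun a => (n a i' : ℚ))))
      = (C.det : ℚ) * ∑ i ∈ Finset.Icc 1 k, ∑ i' ∈ Finset.Icc 1 k, ((min i i' : ℕ) : ℚ) *
          ((∑ a, ∑ b, (t a : ℚ) * (C a b : ℚ) * (m a i : ℚ) * (m b i' : ℚ))
            - 2 * ∑ a, (t a : ℚ) * (n a i' : ℚ) * (m a i : ℚ)) := by
    have e : ∀ i i' : ℕ, ((min i i' : ℕ) : ℚ) *
          (dotProduct
              (fun a => (C.map (Int.cast : ℤ → ℚ)).mulVec (fun b => (m b i : ℚ)) a - (n a i : ℚ))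
              (Λ.mulVec (fun a =>
                (C.map (Int.cast : ℤ → ℚ)).mulVec (fun b => (m b i' : ℚ)) a - (n a i' : ℚ)))
            - dotProduct (fun a => (n a i : ℚ)) (Λ.mulVec (fun a => (n a i' : ℚ))))
        = (C.det : ℚ) * (((min i i' : ℕ) : ℚ) *
            ((∑ a, ∑ b, (t a : ℚ) * (C a b : ℚ) * (m a i : ℚ) * (m b i' : ℚ))
              - 2 * ∑ a, (t a : ℚ) * (n a i' : ℚ) * (m a i : ℚ)))
          + (((min i i' : ℕ) : ℚ) * ((C.det : ℚ) * ∑ a, (t a : ℚ) * (n a i' : ℚ) * (m a i : ℚ))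
            - ((min i i' : ℕ) : ℚ) * ((C.det : ℚ) * ∑ a, (t a : ℚ) * (n a i : ℚ) * (m a i' : ℚ))) := by
      intro i i'
      rw [hF i i', hS1 i i']
      ring
    calc ∑ i ∈ Finset.Icc 1 k, ∑ i' ∈ Finset.Icc 1 k, ((min i i' : ℕ) : ℚ) *
          (dotProduct
              (fun a => (C.map (Int.cast : ℤ → ℚ)).mulVec (fun b => (m b i : ℚ)) a - (n a i : ℚ))
              (Λ.mulVec (fun a =>
                (C.map (Int.cast : ℤ → ℚ)).mulVec (fun b => (m b i' : ℚ)) a - (n a i' : ℚ)))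
            - dotProduct (fun a => (n a i : ℚ)) (Λ.mulVec (fun a => (n a i' : ℚ))))
        = ∑ i ∈ Finset.Icc 1 k, ∑ i' ∈ Finset.Icc 1 k,
            ((C.det : ℚ) * (((min i i' : ℕ) : ℚ) *
              ((∑ a, ∑ b, (t a : ℚ) * (C a b : ℚ) * (m a i : ℚ) * (m b i' : ℚ))
                - 2 * ∑ a, (t a : ℚ) * (n a i' : ℚ) * (m a i : ℚ)))
            + (((min i i' : ℕ) : ℚ) * ((C.det : ℚ) * ∑ a, (t a : ℚ) * (n a i' : ℚ) * (m a i : ℚ))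
              - ((min i i' : ℕ) : ℚ) * ((C.det : ℚ) * ∑ a, (t a : ℚ) * (n a i : ℚ) * (m a i' : ℚ)))) :=
          Finset.sum_congr rfl fun i _ => Finset.sum_congr rfl fun i' _ => e i i'
      _ = (∑ i ∈ Finset.Icc 1 k, ∑ i' ∈ Finset.Icc 1 k,
            (C.det : ℚ) * (((min i i' : ℕ) : ℚ) *
              ((∑ a, ∑ b, (t a : ℚ) * (C a b : ℚ) * (m a i : ℚ) * (m b i' : ℚ))
                - 2 * ∑ a, (t a : ℚ) * (n a i' : ℚ) * (m a i : ℚ))))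
          + ((∑ i ∈ Finset.Icc 1 k, ∑ i' ∈ Finset.Icc 1 k,
              ((min i i' : ℕ) : ℚ) * ((C.det : ℚ) * ∑ a, (t a : ℚ) * (n a i' : ℚ) * (m a i : ℚ)))
            - ∑ i ∈ Finset.Icc 1 k, ∑ i' ∈ Finset.Icc 1 k,
              ((min i i' : ℕ) : ℚ) * ((C.det : ℚ) * ∑ a, (t a : ℚ) * (n a i : ℚ) * (m a i' : ℚ))) := by
          simp [Finset.sum_add_distrib, Finset.sum_sub_distrib]
      _ = ∑ i ∈ Finset.Icc 1 k, ∑ i' ∈ Finset.Icc 1 k,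
            (C.det : ℚ) * (((min i i' : ℕ) : ℚ) *
              ((∑ a, ∑ b, (t a : ℚ) * (C a b : ℚ) * (m a i : ℚ) * (m b i' : ℚ))
                - 2 * ∑ a, (t a : ℚ) * (n a i' : ℚ) * (m a i : ℚ))) := by
          rw [← hswap]
          ring
      _ = (C.det : ℚ) * ∑ i ∈ Finset.Icc 1 k, ∑ i' ∈ Finset.Icc 1 k, ((min i i' : ℕ) : ℚ) *
            ((∑ a, ∑ b, (t a : ℚ) * (C a b : ℚ) * (m a i : ℚ) * (m b i' : ℚ))
              - 2 * ∑ a, (t a : ℚ) * (n a i' : ℚ) * (m a i : ℚ)) := by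
          rw [Finset.mul_sum]
          exact Finset.sum_congr rfl fun i _ => (Finset.mul_sum _ _ _).symm
  -- final assembly
  rw [hQ2, hsum2, hbig]
  field_simp
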